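/- Let (G,σ) be a signed graph with χ_sym(G,σ) = t + 2k (t maximum) and let c be a corresponding minimal proper S_{2k}^t-coloring with self-inverse colors 0_1,…,0_t and non-self-inverse color pairs ±s_1,…,±s_k. For any p ∈ {0,…,t} and q ∈ {0,…,k}, let I_p be the union of any p of the self-inverse color classes, S_q the union of any q of the non-self-inverse color classes, and (H_{p,q}, σ_{p,q}) the signed subgraph of (G,σ) induced by I_p ∪ S_q. Then χ_sym(H_{p,q}, σ_{p,q}) = χ^p_sym(H_{p,q}, σ_{p,q}) = p + 2q. -/

import Mathlib

/-!
Common framework for symmetric-set colorings of signed graphs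
(C. Cappello, E. Steffen, "Symmetric set coloring of signed graphs").

* A signed graph is a `SimpleGraph V` together with a signature
  `σ : Sym2 V → Bool` (`true` = positive edge, `false` = negative edge);
  only the values of `σ` on edges of `G` matter.
* The canonical symmetric set `S_{2k}^t` with `t` self-inverse elements and
  `k` pairs of non-self-inverse elements is `Sym t k := Fin t ⊕ Fin k × Bool`,
  with negation `symNeg` fixing the `Fin t` part and swapping the Boolean.
-/

namespace SymSet

/-- The canonical symmetric set `S_{2k}^t`. -/
abbrev Sym (t k : ℕ) := Fin t ⊕ Fin k × Bool

/-- Negation on the symmetric set: self-inverse elements are fixed,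
the two elements of each pair are exchanged. -/
def symNeg {t k : ℕ} : Sym t k → Sym t k
  | .inl i => .inl i
  | .inr (i, b) => .inr (i, !b)

/-- Action of a sign on a color: a positive sign acts trivially,
a negative sign acts by negation. -/
def signAct {t k : ℕ} (s : Bool) (x : Sym t k) : Sym t k :=
  if s then x else symNeg x

variable {V : Type*}

/-- A proper `S_{2k}^t`-coloring of the signed graph `(G, σ)`:
`c v ≠ σ(e) · c w` for every edge `e = vw`. -/
def IsProperColoring (G : SimpleGraph V) (σ : Sym2 V → Bool) {t k : ℕ}
    (c : V → Sym t k) : Prop :=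
  ∀ ⦃v w : V⦄, G.Adj v w → c v ≠ signAct (σ s(v, w)) (c w)

/-- `(G, σ)` admits a proper `S_{2k}^t`-coloring. -/
def SymColorable (G : SimpleGraph V) (σ : Sym2 V → Bool) (t k : ℕ) : Prop :=
  ∃ c : V → Sym t k, IsProperColoring G σ c

/-- The symset `t`-chromatic number `χ^t_sym(G, σ)`: the least `t + 2k`
such that `(G, σ)` admits a proper `S_{2k}^t`-coloring. -/
noncomputable def symChromT (G : SimpleGraph V) (σ : Sym2 V → Bool) (t : ℕ) : ℕ :=
  sInf {n | ∃ k, n = t + 2 * k ∧ SymColorable G σ t k}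

/-- The chromatic number of the underlying graph, as a natural number. -/
noncomputable def chrom (G : SimpleGraph V) : ℕ := G.chromaticNumber.toNat

/-- The symset chromatic number `χ_sym(G, σ)`: the minimum of
`χ^t_sym(G, σ)` over `0 ≤ t ≤ χ(G)`. -/
noncomputable def symChrom (G : SimpleGraph V) (σ : Sym2 V → Bool) : ℕ :=
  sInf {n | ∃ t ≤ chrom G, n = symChromT G σ t}

/-- Switching a signature at the vertex set `X = {v | X v = true}`:
the sign of every edge with exactly one end in `X` is reversed. -/
def switch (X : V → Bool) (σ : Sym2 V → Bool) : Sym2 V → Bool :=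
  fun e =>
    xor (Sym2.lift ⟨fun u v => xor (X u) (X v), fun u v => by simp [Bool.xor_comm]⟩ e) (σ e)

/-- Two signatures of `G` are equivalent if one is obtained from the other by a
switching (equality of signs is only required on the edges of `G`). -/
def Equivalent (G : SimpleGraph V) (σ σ' : Sym2 V → Bool) : Prop :=
  ∃ X : V → Bool, ∀ e ∈ G.edgeSet, σ' e = switch X σ e

/-- The number of negative edges of a closed walk. -/
def negCount (σ : Sym2 V → Bool) {G : SimpleGraph V} {u : V} (w : G.Walk u u) : ℕ :=
  (w.edges.filter (fun e => !σ e)).length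

/-- `(G, σ)` is balanced: every circuit has sign `+1`,
i.e. an even number of negative edges. -/
def Balanced (G : SimpleGraph V) (σ : Sym2 V → Bool) : Prop :=
  ∀ ⦃u : V⦄ (w : G.Walk u u), w.IsCycle → Even (negCount σ w)

/-- `(G, σ)` is antibalanced: every even circuit has sign `+1` and every odd
circuit has sign `-1`. -/
def Antibalanced (G : SimpleGraph V) (σ : Sym2 V → Bool) : Prop :=
  ∀ ⦃u : V⦄ (w : G.Walk u u), w.IsCycle → (Even w.length ↔ Even (negCount σ w))

/-- Restriction of a signature to (the induced subgraph on) a vertex subset. -/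
def restrict (σ : Sym2 V → Bool) (s : Set V) : Sym2 s → Bool :=
  fun e => σ (Sym2.map Subtype.val e)

/-- A circuit: a connected 2-regular graph. -/
def IsCircuit (G : SimpleGraph V) [Fintype V] [DecidableRel G.Adj] : Prop :=
  G.Connected ∧ G.IsRegularOfDegree 2

/-- The frustration index `l(G, σ)`: the least number of edges whose deletion
makes the signed graph balanced. -/
noncomputable def frustrationIndex (G : SimpleGraph V) (σ : Sym2 V → Bool) : ℕ :=
  sInf {n | ∃ F : Finset (Sym2 V), F.card = n ∧ Balanced (G.deleteEdges ↑F) σ}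

/-- A proper coloring of the signed expansion `±G` (each edge of `G` replaced by
a positive and a negative parallel edge): for each edge `vw` of `G`,
`c v ∉ {c w, -c w}`. -/
def IsProperExpColoring (G : SimpleGraph V) {t k : ℕ} (c : V → Sym t k) : Prop :=
  ∀ ⦃v w : V⦄, G.Adj v w → c v ≠ c w ∧ c v ≠ symNeg (c w)

/-- The symset `t`-chromatic number of the signed expansion `±G`. -/
noncomputable def expSymChromT (G : SimpleGraph V) (t : ℕ) : ℕ :=
  sInf {n | ∃ k, n = t + 2 * k ∧ ∃ c : V → Sym t k, IsProperExpColoring G c}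

end SymSet

namespace SymSet

section Auxiliary

variable {V : Type*}

lemma signAct_inl {t k : ℕ} (s : Bool) (i : Fin t) :
    signAct s (Sum.inl i : Sym t k) = Sum.inl i := by
  cases s <;> rfl

/-- The color `x` is one of the colors selected by `P` and `Q`. -/
def InSupp {t k : ℕ} (P : Finset (Fin t)) (Q : Finset (Fin k)) : Sym t k → Prop
  | .inl i => i ∈ P
  | .inr (j, _) => j ∈ Q

/-- The color `x` is none of the colors selected by `P` and `Q`. -/
def OutSupp {t k : ℕ} (P : Finset (Fin t)) (Q : Finset (Fin k)) : Sym t k → Prop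
  | .inl i => i ∉ P
  | .inr (j, _) => j ∉ Q

lemma outSupp_of_not_inSupp {t k : ℕ} {P : Finset (Fin t)} {Q : Finset (Fin k)}
    {x : Sym t k} (h : ¬ InSupp P Q x) : OutSupp P Q x := by
  rcases x with i | ⟨j, b⟩ <;> exact h

lemma inSupp_symNeg {t k : ℕ} {P : Finset (Fin t)} {Q : Finset (Fin k)}
    {x : Sym t k} (h : InSupp P Q x) : InSupp P Q (symNeg x) := by
  rcases x with i | ⟨j, b⟩ <;> exact h

lemma outSupp_symNeg {t k : ℕ} {P : Finset (Fin t)} {Q : Finset (Fin k)}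
    {x : Sym t k} (h : OutSupp P Q x) : OutSupp P Q (symNeg x) := by
  rcases x with i | ⟨j, b⟩ <;> exact h

lemma inSupp_signAct {t k : ℕ} {P : Finset (Fin t)} {Q : Finset (Fin k)}
    {x : Sym t k} (s : Bool) (h : InSupp P Q x) : InSupp P Q (signAct s x) := by
  cases s
  · exact inSupp_symNeg h
  · exact h

lemma outSupp_signAct {t k : ℕ} {P : Finset (Fin t)} {Q : Finset (Fin k)}
    {x : Sym t k} (s : Bool) (h : OutSupp P Q x) : OutSupp P Q (signAct s x) := by
  cases s
  · exact outSupp_symNeg h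
  · exact h

/-- Renaming of the selected colors into the canonical `Sym P.card Q.card`. -/
noncomputable def psi {t k : ℕ} (P : Finset (Fin t)) (Q : Finset (Fin k)) :
    (x : Sym t k) → InSupp P Q x → Sym P.card Q.card
  | .inl i, h => .inl ((P.orderIsoOfFin rfl).symm ⟨i, h⟩)
  | .inr (j, b), h => .inr ((Q.orderIsoOfFin rfl).symm ⟨j, h⟩, b)

lemma psi_symNeg {t k : ℕ} (P : Finset (Fin t)) (Q : Finset (Fin k))
    (x : Sym t k) (h : InSupp P Q x) (h' : InSupp P Q (symNeg x)) :
    psi P Q (symNeg x) h' = symNeg (psi P Q x h) := by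
  rcases x with i | ⟨j, b⟩ <;> rfl

lemma signAct_psi {t k : ℕ} (P : Finset (Fin t)) (Q : Finset (Fin k)) (s : Bool)
    (x : Sym t k) (h : InSupp P Q x) (h' : InSupp P Q (signAct s x)) :
    signAct s (psi P Q x h) = psi P Q (signAct s x) h' := by
  cases s
  · exact (psi_symNeg P Q x h h').symm
  · rfl

lemma psi_inj {t k : ℕ} {P : Finset (Fin t)} {Q : Finset (Fin k)}
    {x y : Sym t k} {hx : InSupp P Q x} {hy : InSupp P Q y}
    (h : psi P Q x hx = psi P Q y hy) : x = y := by
  rcases x with i | ⟨j, b⟩ <;> rcases y with i' | ⟨j', b'⟩ <;>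
    simp only [psi, Sum.inl.injEq, Sum.inr.injEq, Prod.mk.injEq, reduceCtorEq] at h ⊢
  · have := (P.orderIsoOfFin rfl).symm.injective h
    exact congrArg Subtype.val this
  · refine ⟨?_, h.2⟩
    have := (Q.orderIsoOfFin rfl).symm.injective h.1
    exact congrArg Subtype.val this

/-- Renaming of the non-selected colors into an initial segment. -/
noncomputable def gmap {t k t'' k'' : ℕ} (P : Finset (Fin t)) (Q : Finset (Fin k))
    (hP : Pᶜ.card ≤ t'') (hQ : Qᶜ.card ≤ k'') :
    (x : Sym t k) → OutSupp P Q x → Sym t'' k''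
  | .inl i, h => .inl (Fin.castLE hP ((Pᶜ.orderIsoOfFin rfl).symm ⟨i, Finset.mem_compl.2 h⟩))
  | .inr (j, b), h =>
      .inr (Fin.castLE hQ ((Qᶜ.orderIsoOfFin rfl).symm ⟨j, Finset.mem_compl.2 h⟩), b)

lemma gmap_symNeg {t k t'' k'' : ℕ} (P : Finset (Fin t)) (Q : Finset (Fin k))
    (hP : Pᶜ.card ≤ t'') (hQ : Qᶜ.card ≤ k'')
    (x : Sym t k) (h : OutSupp P Q x) (h' : OutSupp P Q (symNeg x)) :
    gmap P Q hP hQ (symNeg x) h' = symNeg (gmap P Q hP hQ x h) := by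
  rcases x with i | ⟨j, b⟩ <;> rfl

lemma signAct_gmap {t k t'' k'' : ℕ} (P : Finset (Fin t)) (Q : Finset (Fin k))
    (hP : Pᶜ.card ≤ t'') (hQ : Qᶜ.card ≤ k'') (s : Bool)
    (x : Sym t k) (h : OutSupp P Q x) (h' : OutSupp P Q (signAct s x)) :
    signAct s (gmap P Q hP hQ x h) = gmap P Q hP hQ (signAct s x) h' := by
  cases s
  · exact (gmap_symNeg P Q hP hQ x h h').symm
  · rfl

lemma gmap_inj {t k t'' k'' : ℕ} {P : Finset (Fin t)} {Q : Finset (Fin k)}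
    {hP : Pᶜ.card ≤ t''} {hQ : Qᶜ.card ≤ k''}
    {x y : Sym t k} {hx : OutSupp P Q x} {hy : OutSupp P Q y}
    (h : gmap P Q hP hQ x hx = gmap P Q hP hQ y hy) : x = y := by
  rcases x with i | ⟨j, b⟩ <;> rcases y with i' | ⟨j', b'⟩ <;>
    simp only [gmap, Sum.inl.injEq, Sum.inr.injEq, Prod.mk.injEq, reduceCtorEq] at h ⊢
  · have := (Pᶜ.orderIsoOfFin rfl).symm.injective ((Fin.castLE_injective hP) h)
    simpa using this
  · refine ⟨?_, h.2⟩
    have := (Qᶜ.orderIsoOfFin rfl).symm.injective ((Fin.castLE_injective hQ) h.1)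
    simpa using this

/-- Renaming of fresh colors into a final segment. -/
def fmap {t' k' t'' k'' : ℕ} (a b : ℕ) (ha : a + t' ≤ t'') (hb : b + k' ≤ k'') :
    Sym t' k' → Sym t'' k''
  | .inl i => .inl ⟨a + i.val, by have := i.isLt; omega⟩
  | .inr (j, bo) => .inr (⟨b + j.val, by have := j.isLt; omega⟩, bo)

lemma fmap_symNeg {t' k' t'' k'' : ℕ} (a b : ℕ) (ha : a + t' ≤ t'') (hb : b + k' ≤ k'')
    (x : Sym t' k') : fmap a b ha hb (symNeg x) = symNeg (fmap a b ha hb x) := by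
  rcases x with i | ⟨j, bo⟩ <;> rfl

lemma signAct_fmap {t' k' t'' k'' : ℕ} (a b : ℕ) (ha : a + t' ≤ t'') (hb : b + k' ≤ k'')
    (s : Bool) (x : Sym t' k') :
    signAct s (fmap a b ha hb x) = fmap a b ha hb (signAct s x) := by
  cases s
  · exact (fmap_symNeg a b ha hb x).symm
  · rfl

lemma fmap_inj {t' k' t'' k'' : ℕ} {a b : ℕ} {ha : a + t' ≤ t''} {hb : b + k' ≤ k''}
    {x y : Sym t' k'} (h : fmap a b ha hb x = fmap a b ha hb y) : x = y := by
  rcases x with i | ⟨j, bo⟩ <;> rcases y with i' | ⟨j', bo'⟩ <;>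
    simp only [fmap, Sum.inl.injEq, Sum.inr.injEq, Prod.mk.injEq, Fin.mk.injEq,
      reduceCtorEq] at h ⊢
  · exact Fin.ext (by omega)
  · exact ⟨Fin.ext (by omega), h.2⟩

lemma fmap_ne_gmap {t k t' k' t'' k'' : ℕ} (P : Finset (Fin t)) (Q : Finset (Fin k))
    (ha : Pᶜ.card + t' ≤ t'') (hb : Qᶜ.card + k' ≤ k'')
    (hP : Pᶜ.card ≤ t'') (hQ : Qᶜ.card ≤ k'')
    (x : Sym t' k') (y : Sym t k) (hy : OutSupp P Q y) :
    fmap Pᶜ.card Qᶜ.card ha hb x ≠ gmap P Q hP hQ y hy := by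
  rcases x with i | ⟨j, bo⟩ <;> rcases y with i' | ⟨j', b'⟩ <;> intro h <;>
    simp only [fmap, gmap, Sum.inl.injEq, Sum.inr.injEq, Prod.mk.injEq,
      reduceCtorEq] at h
  · have h2 := congrArg Fin.val h
    have h3 := ((Pᶜ.orderIsoOfFin rfl).symm ⟨i', Finset.mem_compl.2 hy⟩).isLt
    simp only [Fin.coe_castLE] at h2
    omega
  · have h2 := congrArg Fin.val h.1
    have h3 := ((Qᶜ.orderIsoOfFin rfl).symm ⟨j', Finset.mem_compl.2 hy⟩).isLt
    simp only [Fin.coe_castLE] at h2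
    omega

lemma restrict_pair (σ : Sym2 V → Bool) (W : Set V) (a b : ↥W) :
    restrict σ W s(a, b) = σ s(a.1, b.1) := by
  simp [restrict]

/-- A proper coloring of the subgraph induced by the selected color classes,
obtained by renaming the restriction of the original coloring. -/
lemma colorable_restrict (G : SimpleGraph V) (σ : Sym2 V → Bool) {t k : ℕ}
    (c : V → Sym t k) (hc : IsProperColoring G σ c)
    (P : Finset (Fin t)) (Q : Finset (Fin k)) (W : Set V)
    (hmem : ∀ v, v ∈ W ↔ InSupp P Q (c v)) :
    SymColorable (G.induce W) (restrict σ W) P.card Q.card := by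
  refine ⟨fun v => psi P Q (c v.1) ((hmem v.1).1 v.2), ?_⟩
  intro v w hadj heq
  rw [restrict_pair] at heq
  rw [signAct_psi P Q _ _ _ (inSupp_signAct _ ((hmem w.1).1 w.2))] at heq
  exact hc hadj (psi_inj heq)

/-- Combining a proper coloring of the subgraph induced by the selected color
classes with the original coloring on the rest of the graph. -/
lemma combine (G : SimpleGraph V) (σ : Sym2 V → Bool) {t k : ℕ}
    (c : V → Sym t k) (hc : IsProperColoring G σ c)
    (P : Finset (Fin t)) (Q : Finset (Fin k)) (W : Set V)
    (hmem : ∀ v, v ∈ W ↔ InSupp P Q (c v)) {t' k' t'' k'' : ℕ}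
    (ha : Pᶜ.card + t' ≤ t'') (hb : Qᶜ.card + k' ≤ k'')
    (hcol : SymColorable (G.induce W) (restrict σ W) t' k') :
    SymColorable G σ t'' k'' := by
  classical
  obtain ⟨c', hc'⟩ := hcol
  have hP : Pᶜ.card ≤ t'' := le_trans (Nat.le_add_right _ _) ha
  have hQ : Qᶜ.card ≤ k'' := le_trans (Nat.le_add_right _ _) hb
  refine ⟨fun v =>
    if h : v ∈ W then fmap Pᶜ.card Qᶜ.card ha hb (c' ⟨v, h⟩)
    else gmap P Q hP hQ (c v) (outSupp_of_not_inSupp (fun hin => h ((hmem v).2 hin))), ?_⟩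
  intro v w hvw
  by_cases hv : v ∈ W <;> by_cases hw : w ∈ W <;>
    simp only [dif_pos, dif_neg, hv, hw, dite_true, dite_false]
  · -- both in W
    have hadj' : (G.induce W).Adj ⟨v, hv⟩ ⟨w, hw⟩ := hvw
    have hne := hc' hadj'
    rw [restrict_pair] at hne
    intro h
    rw [signAct_fmap] at h
    exact hne (fmap_inj h)
  · -- v in, w out
    intro h
    rw [signAct_gmap P Q hP hQ _ _ _
      (outSupp_signAct _ (outSupp_of_not_inSupp (fun hin => hw ((hmem w).2 hin))))] at h
    exact fmap_ne_gmap P Q ha hb hP hQ _ _ _ h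
  · -- v out, w in
    intro h
    rw [signAct_fmap] at h
    exact fmap_ne_gmap P Q ha hb hP hQ _ _ _ h.symm
  · -- both out
    intro h
    rw [signAct_gmap P Q hP hQ _ _ _
      (outSupp_signAct _ (outSupp_of_not_inSupp (fun hin => hw ((hmem w).2 hin))))] at h
    exact hc hvw (gmap_inj h)

/-- Every (finite) signed graph admits a proper coloring using `|V|` pairs of
non-self-inverse colors. -/
lemma symColorable_card [Fintype V] (G : SimpleGraph V) (σ : Sym2 V → Bool) (t' : ℕ) :
    SymColorable G σ t' (Fintype.card V) := by
  refine ⟨fun v => Sum.inr (Fintype.equivFin V v, true), fun v w h heq => ?_⟩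
  cases hσ : σ s(v, w) <;> rw [hσ] at heq <;> simp [signAct, symNeg] at heq
  exact h.ne heq

/-- The symset chromatic number is at most the (ordinary) chromatic number. -/
lemma symChrom_le_chrom [Fintype V] (G : SimpleGraph V) (σ : Sym2 V → Bool) :
    symChrom G σ ≤ chrom G := by
  obtain ⟨C⟩ := G.colorable_chromaticNumber_of_fintype
  have hcol : SymColorable G σ (chrom G) 0 := by
    refine ⟨fun v => Sum.inl (C v), fun v w h heq => ?_⟩
    beta_reduce at heq
    replace heq := heq.trans (signAct_inl _ _)
    exact C.valid h (Sum.inl_injective heq)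
  have h0 : chrom G + 2 * 0 ∈ {n | ∃ k, n = chrom G + 2 * k ∧ SymColorable G σ (chrom G) k} :=
    ⟨0, rfl, hcol⟩
  have hle2 : symChromT G σ (chrom G) ≤ chrom G := by simpa [symChromT] using Nat.sInf_le h0
  exact le_trans (Nat.sInf_le ⟨chrom G, le_refl _, rfl⟩) hle2

end Auxiliary

/-- let `χ_sym(G,σ) = t + 2k` (`t` maximum) and let `c` be a
corresponding minimal proper `S_{2k}^t`-coloring. For any choice of `p` of the
self-inverse color classes (indexed by `P`) and `q` of the non-self-inverse
color classes (indexed by `Q`), the signed subgraph `(H_{p,q}, σ_{p,q})`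
induced by their union satisfies
`χ_sym(H_{p,q}, σ_{p,q}) = χ^p_sym(H_{p,q}, σ_{p,q}) = p + 2q`. -/
theorem stmt18 {V : Type*} [Fintype V] (G : SimpleGraph V) (σ : Sym2 V → Bool)
    (t k : ℕ) (h1 : symChrom G σ = t + 2 * k) (h2 : t ≤ chrom G)
    (h4 : ∀ t', t' ≤ chrom G → symChromT G σ t' = symChrom G σ → t' ≤ t)
    (c : V → Sym t k) (hc : IsProperColoring G σ c)
    (P : Finset (Fin t)) (Q : Finset (Fin k)) :
    symChrom
        (G.induce {v | (∃ i ∈ P, c v = Sum.inl i) ∨ ∃ j ∈ Q, ∃ b, c v = Sum.inr (j, b)})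
        (restrict σ {v | (∃ i ∈ P, c v = Sum.inl i) ∨ ∃ j ∈ Q, ∃ b, c v = Sum.inr (j, b)})
      = P.card + 2 * Q.card ∧
    symChromT
        (G.induce {v | (∃ i ∈ P, c v = Sum.inl i) ∨ ∃ j ∈ Q, ∃ b, c v = Sum.inr (j, b)})
        (restrict σ {v | (∃ i ∈ P, c v = Sum.inl i) ∨ ∃ j ∈ Q, ∃ b, c v = Sum.inr (j, b)})
        P.card
      = P.card + 2 * Q.card := by
  classical
  set W : Set V :=
    {v | (∃ i ∈ P, c v = Sum.inl i) ∨ ∃ j ∈ Q, ∃ b, c v = Sum.inr (j, b)} with hWdef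
  haveI : Fintype ↥W := Fintype.ofFinite _
  have hmem : ∀ v, v ∈ W ↔ InSupp P Q (c v) := by
    intro v
    constructor
    · rintro (⟨i, hi, hx⟩ | ⟨j, hj, b, hx⟩) <;> rw [hx] <;> assumption
    · intro h
      rcases hcv : c v with i | ⟨j, b⟩ <;> rw [hcv] at h
      · exact Or.inl ⟨i, h, hcv⟩
      · exact Or.inr ⟨j, h, b, hcv⟩
  have hGle : t + 2 * k ≤ chrom G := h1 ▸ symChrom_le_chrom G σ
  have hp : P.card ≤ t := by simpa using P.card_le_univ
  have hq : Q.card ≤ k := by simpa using Q.card_le_univ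
  have hPc : Pᶜ.card = t - P.card := by simp [Finset.card_compl]
  have hQc : Qᶜ.card = k - Q.card := by simp [Finset.card_compl]
  have hlow : ∀ t' k', SymColorable (G.induce W) (restrict σ W) t' k' →
      P.card + 2 * Q.card ≤ t' + 2 * k' := by
    intro t' k' hcol'
    by_contra hlt
    push_neg at hlt
    have hcomb : SymColorable G σ (Pᶜ.card + t') (Qᶜ.card + k') :=
      combine G σ c hc P Q W hmem (le_refl _) (le_refl _) hcol'
    have h2chrom : Pᶜ.card + t' ≤ chrom G := by omega
    have hle1 : symChrom G σ ≤ (Pᶜ.card + t') + 2 * (Qᶜ.card + k') := by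
      refine le_trans (Nat.sInf_le ⟨Pᶜ.card + t', h2chrom, rfl⟩) ?_
      exact Nat.sInf_le ⟨Qᶜ.card + k', rfl, hcomb⟩
    omega
  have hub : SymColorable (G.induce W) (restrict σ W) P.card Q.card :=
    colorable_restrict G σ c hc P Q W hmem
  have hTgen : ∀ t'', P.card + 2 * Q.card ≤ symChromT (G.induce W) (restrict σ W) t'' := by
    intro t''
    refine le_csInf ⟨t'' + 2 * Fintype.card ↥W,
      Fintype.card ↥W, rfl, symColorable_card _ _ _⟩ ?_
    rintro n ⟨k'', rfl, hcol'⟩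
    exact hlow t'' k'' hcol'
  have hT : symChromT (G.induce W) (restrict σ W) P.card = P.card + 2 * Q.card :=
    le_antisymm (Nat.sInf_le ⟨Q.card, rfl, hub⟩) (hTgen _)
  have hSge : P.card + 2 * Q.card ≤ symChrom (G.induce W) (restrict σ W) := by
    refine le_csInf ⟨symChromT (G.induce W) (restrict σ W) 0, 0, Nat.zero_le _, rfl⟩ ?_
    rintro n ⟨t'', -, rfl⟩
    exact hTgen t''
  have hchromH : P.card ≤ chrom (G.induce W) :=
    le_trans (Nat.le_add_right _ _) (le_trans hSge (symChrom_le_chrom _ _))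
  have hSle : symChrom (G.induce W) (restrict σ W) ≤ P.card + 2 * Q.card :=
    le_trans (Nat.sInf_le ⟨P.card, hchromH, rfl⟩) (le_of_eq hT)
  exact ⟨le_antisymm hSle hSge, hT⟩

end SymSet
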